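/- Let X be a metric space, α: [0,1] → X a path, and U an open cover of X. Then there exists δ > 0 such that every subinterval of [0,1] of length at most δ is mapped by α into some member of U; moreover, for any two such choices 0 < δ₁ < δ₂, the two resulting U-chains α(0), α(δ₁), α(2δ₁), …, α(1) and α(0), α(δ₂), α(2δ₂), …, α(1) are U-homotopic. -/

import Mathlib

open Set

variable {X : Type*} [TopologicalSpace X]

/-- The star of a point `x` with respect to a cover: the union of all members containing `x`. -/
def ptStar (𝒞 : Set (Set X)) (x : X) : Set X := ⋃₀ {C ∈ 𝒞 | x ∈ C}

/-- The star `St(W, 𝒞)` of a set `W`: the union of all members of `𝒞` meeting `W`. -/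
def setStar (𝒞 : Set (Set X)) (W : Set X) : Set X := ⋃₀ {C ∈ 𝒞 | (C ∩ W).Nonempty}

/-- The cover `St(𝒞) = {St(C, 𝒞) : C ∈ 𝒞}`. -/
def starCover (𝒞 : Set (Set X)) : Set (Set X) := setStar 𝒞 '' 𝒞

/-- `𝒱` refines `𝒰`: every member of `𝒱` is contained in some member of `𝒰`. -/
def Refines (𝒱 𝒰 : Set (Set X)) : Prop := ∀ V ∈ 𝒱, ∃ U ∈ 𝒰, V ⊆ U

/-- An open cover of `X`. -/
def IsOpenCover (𝒰 : Set (Set X)) : Prop := (∀ U ∈ 𝒰, IsOpen U) ∧ ⋃₀ 𝒰 = univ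

/-- `𝒱` star refines `𝒰`: the cover of point stars of `𝒱` refines `𝒰`. -/
def StarRefines (𝒱 𝒰 : Set (Set X)) : Prop := ∀ x : X, ∃ U ∈ 𝒰, ptStar 𝒱 x ⊆ U

/-- Two points lie in a common member of `𝒰`. -/
def ChainCond (𝒰 : Set (Set X)) (a b : X) : Prop := ∃ U ∈ 𝒰, a ∈ U ∧ b ∈ U

/-- A `𝒰`-chain: a nonempty finite list of points of `X` with consecutive points lying in
a common member of `𝒰`. -/
def IsUChain (𝒰 : Set (Set X)) (l : List X) : Prop := l ≠ [] ∧ l.Chain' (ChainCond 𝒰)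

/-- Elementary moves on `𝒰`-chains: inserting or deleting a vertex within a simplex of the
Rips complex `R(X, 𝒰)`, and inserting or deleting a repeated vertex. -/
inductive ChainStep (𝒰 : Set (Set X)) : List X → List X → Prop
  | insert (pre post : List X) (a y b : X) (U : Set X) (hU : U ∈ 𝒰)
      (ha : a ∈ U) (hy : y ∈ U) (hb : b ∈ U) :
      ChainStep 𝒰 (pre ++ a :: b :: post) (pre ++ a :: y :: b :: post)
  | delete (pre post : List X) (a y b : X) (U : Set X) (hU : U ∈ 𝒰)
      (ha : a ∈ U) (hy : y ∈ U) (hb : b ∈ U) :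
      ChainStep 𝒰 (pre ++ a :: y :: b :: post) (pre ++ a :: b :: post)
  | dup (pre post : List X) (a : X) :
      ChainStep 𝒰 (pre ++ a :: post) (pre ++ a :: a :: post)
  | dedup (pre post : List X) (a : X) :
      ChainStep 𝒰 (pre ++ a :: a :: post) (pre ++ a :: post)

/-- Two `𝒰`-chains are `𝒰`-homotopic when they are related by a finite sequence of
elementary moves. -/
def ChainHomotopic (𝒰 : Set (Set X)) : List X → List X → Prop :=
  Relation.ReflTransGen (ChainStep 𝒰)

/-- `c` is a `𝒰`-chain sampling of the path `β`: it is obtained by evaluating `β` along a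
partition `0 = t₀ ≤ ⋯ ≤ tₙ = 1` fine enough that each subinterval maps into a member of `𝒰`. -/
def Samples (𝒰 : Set (Set X)) {x y : X} (β : Path x y) (c : List X) : Prop :=
  ∃ (n : ℕ) (t : Fin (n + 1) → unitInterval), Monotone t ∧ t 0 = 0 ∧ t (Fin.last n) = 1 ∧
    (∀ i : Fin n, ∃ U ∈ 𝒰, β '' Set.Icc (t i.castSucc) (t i.succ) ⊆ U) ∧
    c = List.ofFn fun i => β (t i)

variable {M : Type*} [MetricSpace M]

/-- The uniform `δ`-sample chain `α(0), α(δ), α(2δ), …, α(1)` of a path. -/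
noncomputable def uniformSample {x y : M} (α : Path x y) (δ : ℝ) : List M :=
  List.ofFn fun i : Fin (⌈1 / δ⌉₊ + 1) =>
    α (Set.projIcc (0 : ℝ) 1 zero_le_one ((i : ℕ) * δ))

/-- `δ` is a fine mesh for `α` with respect to `𝒰`: every subinterval of `[0,1]` of length
at most `δ` is mapped by `α` into some member of `𝒰`. -/
def FineMesh (𝒰 : Set (Set M)) {x y : M} (α : Path x y) (δ : ℝ) : Prop :=
  ∀ s t : unitInterval, (t : ℝ) - (s : ℝ) ≤ δ → ∃ U ∈ 𝒰, α '' Set.Icc s t ⊆ U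

section Aux

variable {Y : Type*} [TopologicalSpace Y]

lemma chainStep_symm {𝒰 : Set (Set Y)} {l l' : List Y} (h : ChainStep 𝒰 l l') :
    ChainStep 𝒰 l' l := by
  cases h with
  | insert pre post a y b U hU ha hy hb => exact ChainStep.delete pre post a y b U hU ha hy hb
  | delete pre post a y b U hU ha hy hb => exact ChainStep.insert pre post a y b U hU ha hy hb
  | dup pre post a => exact ChainStep.dedup pre post a
  | dedup pre post a => exact ChainStep.dup pre post a

lemma chainHomotopic_symm {𝒰 : Set (Set Y)} {l l' : List Y} (h : ChainHomotopic 𝒰 l l') :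
    ChainHomotopic 𝒰 l' l := by
  induction h with
  | refl => exact Relation.ReflTransGen.refl
  | tail _ hstep ih =>
      exact Relation.ReflTransGen.trans (Relation.ReflTransGen.single (chainStep_symm hstep)) ih

lemma chainStep_cons {𝒰 : Set (Set Y)} {l l' : List Y} (z : Y) (h : ChainStep 𝒰 l l') :
    ChainStep 𝒰 (z :: l) (z :: l') := by
  cases h with
  | insert pre post a y b U hU ha hy hb => exact ChainStep.insert (z :: pre) post a y b U hU ha hy hb
  | delete pre post a y b U hU ha hy hb => exact ChainStep.delete (z :: pre) post a y b U hU ha hy hb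
  | dup pre post a => exact ChainStep.dup (z :: pre) post a
  | dedup pre post a => exact ChainStep.dedup (z :: pre) post a

lemma chainHomotopic_cons {𝒰 : Set (Set Y)} {l l' : List Y} (z : Y)
    (h : ChainHomotopic 𝒰 l l') : ChainHomotopic 𝒰 (z :: l) (z :: l') :=
  Relation.ReflTransGen.lift (z :: ·) (fun _ _ hs => chainStep_cons z hs) _ _ h

/-- The key refinement lemma: if `l₁` is a sublist of the sorted list `l₂`, and the chain
`a :: l₁ ++ [b]` has gaps at most `δ`, then the corresponding sampled chains are homotopic. -/
lemma key_refine {M' : Type*} [MetricSpace M'] (𝒰 : Set (Set M')) (g : ℝ → M') (δ : ℝ)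
    (hfine : ∀ a b : ℝ, a ≤ b → b - a ≤ δ → ∃ U ∈ 𝒰, ∀ z, a ≤ z → z ≤ b → g z ∈ U)
    (l₂ : List ℝ) : ∀ (a b : ℝ) (l₁ : List ℝ), l₁.Sublist l₂ →
      (a :: l₂ ++ [b]).Pairwise (· ≤ ·) →
      (a :: l₁ ++ [b]).Chain' (fun s t => t - s ≤ δ) →
      ChainHomotopic 𝒰 ((a :: l₁ ++ [b]).map g) ((a :: l₂ ++ [b]).map g) := by
  induction l₂ with
  | nil =>
    intro a b l₁ hsub _ _
    rw [List.sublist_nil.mp hsub]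
    exact Relation.ReflTransGen.refl
  | cons c l₂' ih =>
    intro a b l₁ hsub hsorted hchain
    have hsorted' := hsorted
    rw [List.cons_append, List.cons_append, List.pairwise_cons, List.pairwise_cons] at hsorted'
    obtain ⟨ha_all, hc_all, hs3⟩ := hsorted'
    cases hsub with
    | @cons _ _ _ hsubtail =>
      have hsorted2 : (a :: l₂' ++ [b]).Pairwise (· ≤ ·) := by
        rw [List.cons_append, List.pairwise_cons]
        exact ⟨fun z hz => le_trans (ha_all c (List.mem_cons_self)) (hc_all z hz), hs3⟩
      have h1 := ih a b l₁ hsubtail hsorted2 hchain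
      obtain ⟨d, r, hdr⟩ := List.exists_cons_of_ne_nil (show l₂' ++ [b] ≠ [] by simp)
      obtain ⟨e, r₁, her⟩ := List.exists_cons_of_ne_nil (show l₁ ++ [b] ≠ [] by simp)
      have hde : d ≤ e := by
        have hmem : e ∈ d :: r := by
          rw [← hdr]
          exact (hsubtail.append (List.Sublist.refl [b])).subset
            (her ▸ List.mem_cons_self)
        rcases List.mem_cons.mp hmem with h | h
        · exact h.ge
        · have := hdr ▸ hs3
          rw [List.pairwise_cons] at this
          exact this.1 e h
      have hea : e - a ≤ δ := by
        have hc := hchain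
        rw [List.cons_append, her, List.Chain', List.isChain_cons_cons] at hc
        exact hc.1
      have hac : a ≤ c := ha_all c (List.mem_cons_self)
      have hcd : c ≤ d := hc_all d (by rw [hdr]; exact List.mem_cons_self)
      have had : a ≤ d := hac.trans hcd
      obtain ⟨U, hU, hmemU⟩ := hfine a d had (by linarith)
      refine h1.tail ?_
      have e1 : ((a :: l₂' ++ [b]).map g) = [] ++ g a :: g d :: r.map g := by
        rw [List.cons_append, hdr]; simp
      have e2 : ((a :: (c :: l₂') ++ [b]).map g) = [] ++ g a :: g c :: g d :: r.map g := by
        rw [List.cons_append, List.cons_append, hdr]; simp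
      rw [e1, e2]
      exact ChainStep.insert [] (r.map g) (g a) (g c) (g d) U hU
        (hmemU a le_rfl had) (hmemU c hac hcd) (hmemU d had le_rfl)
    | @cons_cons l₁' _ _ hsubtail =>
      have hs2 : (c :: l₂' ++ [b]).Pairwise (· ≤ ·) := by
        rw [List.cons_append, List.pairwise_cons]
        exact ⟨hc_all, hs3⟩
      have hch' : (c :: l₁' ++ [b]).Chain' (fun s t => t - s ≤ δ) := by
        have hc := hchain
        rw [List.cons_append] at hc
        exact hc.tail
      have h := ih c b l₁' hsubtail hs2 hch'
      have h2 := chainHomotopic_cons (g a) h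
      simpa using h2

end Aux

section RealAux

lemma min_sub_min_le {u v δ : ℝ} (hδ : 0 ≤ δ) (h : v - u ≤ δ) : min v 1 - min u 1 ≤ δ := by
  rcases le_total v 1 with h1 | h1 <;> rcases le_total u 1 with h2 | h2 <;>
    simp [min_eq_left, min_eq_right, h1, h2] <;> linarith

lemma projIcc_sub_le {a b : ℝ} (hab : a ≤ b) :
    (Set.projIcc (0:ℝ) 1 zero_le_one b : ℝ) - (Set.projIcc (0:ℝ) 1 zero_le_one a : ℝ) ≤ b - a := by
  have h1 : |max (min 1 b) 0 - max (min 1 a) 0| ≤ |min 1 b - min 1 a| :=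
    abs_max_sub_max_le_abs _ _ _
  have h2 : |min 1 b - min 1 a| ≤ max |(1:ℝ) - 1| |b - a| := abs_min_sub_min_le_max 1 b 1 a
  have h4 : |b - a| = b - a := abs_of_nonneg (by linarith)
  have h2' : |min 1 b - min 1 a| ≤ b - a := by
    rw [← h4]; simpa using h2
  calc (Set.projIcc (0:ℝ) 1 zero_le_one b : ℝ) - (Set.projIcc (0:ℝ) 1 zero_le_one a : ℝ)
      = max (min 1 b) 0 - max (min 1 a) 0 := by
        show max 0 (min 1 b) - max 0 (min 1 a) = _
        rw [max_comm, max_comm (0:ℝ) (min 1 a)]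
    _ ≤ |max (min 1 b) 0 - max (min 1 a) 0| := le_abs_self _
    _ ≤ |min 1 b - min 1 a| := h1
    _ ≤ b - a := h2'

end RealAux

section ListAux

lemma sorted_sandwich {l : List ℝ} (hl : l.Pairwise (· ≤ ·)) (hb : ∀ z ∈ l, 0 ≤ z ∧ z ≤ 1) :
    ((0:ℝ) :: l ++ [1]).Pairwise (· ≤ ·) := by
  rw [List.cons_append, List.pairwise_cons]
  constructor
  · intro z hz
    rcases List.mem_append.mp hz with h | h
    · exact (hb z h).1
    · simp at h; rw [h]; exact zero_le_one
  · rw [List.pairwise_append]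
    exact ⟨hl, List.pairwise_singleton _ _, by simpa using fun z hz => (hb z hz).2⟩

lemma uniformSample_eq {M' : Type*} [MetricSpace M'] {x y : M'} (α : Path x y) (δ : ℝ) :
    uniformSample α δ = (List.ofFn fun i : Fin (⌈1 / δ⌉₊ + 1) => min ((i:ℕ) * δ) 1).map
      (fun t => α (Set.projIcc (0:ℝ) 1 zero_le_one t)) := by
  rw [uniformSample, List.map_ofFn]
  refine congrArg _ (funext fun i => ?_)
  show α (Set.projIcc (0:ℝ) 1 zero_le_one ((i:ℕ) * δ))
      = α (Set.projIcc (0:ℝ) 1 zero_le_one (min ((i:ℕ) * δ) 1))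
  congr 1
  apply Subtype.ext
  show max 0 (min 1 ((i:ℕ) * δ)) = max 0 (min 1 (min ((i:ℕ) * δ) 1))
  rcases le_total ((i:ℕ) * δ : ℝ) 1 with h | h <;>
    simp [min_eq_left, min_eq_right, h]

lemma T_shape (δ : ℝ) (hδ : 0 < δ) :
    ∃ I : List ℝ,
      (List.ofFn fun i : Fin (⌈1 / δ⌉₊ + 1) => min ((i:ℕ) * δ) 1) = 0 :: I ++ [1] ∧
      I.Pairwise (· ≤ ·) ∧ (∀ z ∈ I, 0 ≤ z ∧ z ≤ 1) ∧
      ((0:ℝ) :: I ++ [1]).Chain' (fun s t => t - s ≤ δ) := by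
  set N := ⌈1 / δ⌉₊ with hN
  have hN1 : 1 ≤ N := Nat.one_le_iff_ne_zero.mpr (Nat.ceil_pos.mpr (by positivity)).ne'
  set f : Fin (N + 1) → ℝ := fun i => min ((i:ℕ) * δ) 1 with hf
  have hT0 : f 0 = 0 := by simp [hf]
  set T := List.ofFn f with hT
  have h1 : T = f 0 :: List.ofFn (fun i : Fin N => f i.succ) := List.ofFn_succ
  set t := List.ofFn (fun i : Fin N => f i.succ) with ht
  have htne : t ≠ [] := by
    rw [ht]
    simp only [ne_eq, List.ofFn_eq_nil_iff]
    omega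
  have hbound : ∀ z ∈ T, 0 ≤ z ∧ z ≤ 1 := by
    intro z hz
    rw [hT, List.mem_ofFn] at hz
    obtain ⟨i, rfl⟩ := hz
    exact ⟨le_min (by positivity) zero_le_one, min_le_right _ _⟩
  have hlast : t.getLast htne = 1 := by
    show (List.ofFn fun i : Fin N => f i.succ).getLast htne = 1
    rw [List.getLast_ofFn]
    have hval : ((((⟨N - 1, Nat.sub_one_lt (by omega)⟩ : Fin N)).succ : ℕ) : ℝ) = (N : ℝ) := by
      have : ((⟨N - 1, Nat.sub_one_lt (by omega)⟩ : Fin N).succ : ℕ) = N := by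
        simp [Fin.succ]; omega
      rw [this]
    show min ((((⟨N - 1, _⟩ : Fin N)).succ : ℕ) * δ) 1 = 1
    rw [hval]
    refine min_eq_right ?_
    have hle : (1:ℝ) / δ ≤ (N : ℝ) := Nat.le_ceil _
    calc (1:ℝ) = (1 / δ) * δ := by field_simp
      _ ≤ (N : ℝ) * δ := mul_le_mul_of_nonneg_right hle hδ.le
  have hshape : T = 0 :: t.dropLast ++ [1] := by
    rw [h1, hT0, List.cons_append]
    congr 1
    rw [← hlast]
    exact (List.dropLast_append_getLast htne).symm
  have hTsorted : T.Pairwise (· ≤ ·) := by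
    rw [hT]
    refine List.pairwise_ofFn.mpr fun i j hij => ?_
    refine min_le_min (mul_le_mul_of_nonneg_right ?_ hδ.le) le_rfl
    exact_mod_cast (Nat.cast_le (α := ℝ)).mpr (le_of_lt hij)
  have hTchain : T.Chain' (fun s u => u - s ≤ δ) := by
    rw [hT, List.Chain', List.isChain_iff_getElem]
    intro i hi
    rw [List.getElem_ofFn, List.getElem_ofFn]
    simp only [hf]
    refine min_sub_min_le hδ.le ?_
    have : ((i + 1 : ℕ) : ℝ) * δ - ((i : ℕ) : ℝ) * δ = δ := by push_cast; ring
    linarith [this.le]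
  refine ⟨t.dropLast, hshape, ?_, ?_, ?_⟩
  · have hsub : t.dropLast.Sublist T := by
      refine List.Sublist.trans (List.dropLast_sublist t) ?_
      rw [h1]
      exact List.sublist_cons_self _ _
    exact hTsorted.sublist hsub
  · intro z hz
    refine hbound z ?_
    have hsub : t.dropLast.Sublist T := by
      refine List.Sublist.trans (List.dropLast_sublist t) ?_
      rw [h1]
      exact List.sublist_cons_self _ _
    exact hsub.subset hz
  · rw [← hshape]; exact hTchain

end ListAux

/-- For a path `α` in a metric space and an open cover `𝒰` there is a `δ > 0` such that every
subinterval of length at most `δ` maps into a member of `𝒰` (Lebesgue number lemma), and any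
two uniform sample chains for such mesh sizes are `𝒰`-homotopic. -/
theorem exists_fine_mesh_and_uniformSamples_chainHomotopic
    (𝒰 : Set (Set M)) (h𝒰 : IsOpenCover 𝒰) {x y : M} (α : Path x y) :
    (∃ δ > 0, FineMesh 𝒰 α δ) ∧
      ∀ δ₁ δ₂ : ℝ, 0 < δ₁ → δ₁ < δ₂ → FineMesh 𝒰 α δ₁ → FineMesh 𝒰 α δ₂ →
        ChainHomotopic 𝒰 (uniformSample α δ₁) (uniformSample α δ₂) := by
  constructor
  · -- Lebesgue number lemma
    have hcov : (univ : Set unitInterval) ⊆ ⋃ U : 𝒰, α ⁻¹' (U : Set M) := by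
      intro z _
      have hz : α z ∈ ⋃₀ 𝒰 := by rw [h𝒰.2]; trivial
      obtain ⟨U, hU, hzU⟩ := hz
      exact Set.mem_iUnion.mpr ⟨⟨U, hU⟩, hzU⟩
    obtain ⟨δ, hδ, hball⟩ := lebesgue_number_lemma_of_metric isCompact_univ
      (fun U : 𝒰 => (h𝒰.1 U U.2).preimage α.continuous) hcov
    refine ⟨δ / 2, by linarith, ?_⟩
    intro s t hst
    rcases le_or_gt (s : ℝ) (t : ℝ) with h | h
    · obtain ⟨U, hUb⟩ := hball s trivial
      refine ⟨U, U.2, ?_⟩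
      rintro - ⟨z, hz, rfl⟩
      refine hUb ?_
      have hz1 : (s : ℝ) ≤ (z : ℝ) := hz.1
      have hz2 : (z : ℝ) ≤ (t : ℝ) := hz.2
      rw [Metric.mem_ball, Subtype.dist_eq, Real.dist_eq, abs_of_nonneg (by linarith)]
      linarith
    · have hz : α 0 ∈ ⋃₀ 𝒰 := by rw [h𝒰.2]; trivial
      obtain ⟨U, hU, -⟩ := hz
      refine ⟨U, hU, ?_⟩
      have hempty : Set.Icc s t = (∅ : Set unitInterval) := by
        refine Set.Icc_eq_empty fun hle => ?_
        exact absurd (Subtype.coe_le_coe.mpr hle) (not_le.mpr h)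
      rw [hempty]
      simp
  · intro δ₁ δ₂ h1 h12 hf₁ hf₂
    set g : ℝ → M := fun t => α (Set.projIcc (0:ℝ) 1 zero_le_one t) with hg
    have hPg : ∀ δ : ℝ, 0 < δ → FineMesh 𝒰 α δ → ∀ a b : ℝ, a ≤ b → b - a ≤ δ →
        ∃ U ∈ 𝒰, ∀ z, a ≤ z → z ≤ b → g z ∈ U := by
      intro δ hδ hf a b hab hd
      obtain ⟨U, hU, him⟩ := hf (Set.projIcc 0 1 zero_le_one a) (Set.projIcc 0 1 zero_le_one b)
        (le_trans (projIcc_sub_le hab) hd)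
      refine ⟨U, hU, fun z hz1 hz2 => him ⟨Set.projIcc 0 1 zero_le_one z, ?_, rfl⟩⟩
      exact ⟨monotone_projIcc zero_le_one hz1, monotone_projIcc zero_le_one hz2⟩
    obtain ⟨I₁, hsh₁, hsort₁, hmem₁, hch₁⟩ := T_shape δ₁ h1
    obtain ⟨I₂, hsh₂, hsort₂, hmem₂, hch₂⟩ := T_shape δ₂ (h1.trans h12)
    set Mid : List ℝ := Multiset.sort (↑(I₁ ++ I₂)) (· ≤ ·) with hMid
    have hperm : Mid.Perm (I₁ ++ I₂) := by
      rw [hMid]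
      exact Multiset.coe_eq_coe.mp (Multiset.sort_eq _ _)
    have hMsorted : Mid.Pairwise (· ≤ ·) := Multiset.pairwise_sort _ _
    have hmemM : ∀ z ∈ Mid, 0 ≤ z ∧ z ≤ 1 := by
      intro z hz
      rcases List.mem_append.mp (hperm.subset hz) with h | h
      exacts [hmem₁ z h, hmem₂ z h]
    have hbig : ((0:ℝ) :: Mid ++ [1]).Pairwise (· ≤ ·) := sorted_sandwich hMsorted hmemM
    have hs₁ : I₁.Sublist Mid := List.sublist_of_subperm_of_pairwise
      ((List.sublist_append_left I₁ I₂).subperm.trans hperm.symm.subperm) hsort₁ hMsorted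
    have hs₂ : I₂.Sublist Mid := List.sublist_of_subperm_of_pairwise
      ((List.sublist_append_right I₁ I₂).subperm.trans hperm.symm.subperm) hsort₂ hMsorted
    have H₁ := key_refine 𝒰 g δ₁ (hPg δ₁ h1 hf₁) Mid 0 1 I₁ hs₁ hbig hch₁
    have H₂ := key_refine 𝒰 g δ₂ (hPg δ₂ (h1.trans h12) hf₂) Mid 0 1 I₂ hs₂ hbig hch₂
    rw [uniformSample_eq α δ₁, uniformSample_eq α δ₂, hsh₁, hsh₂]
    exact H₁.trans (chainHomotopic_symm H₂)
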